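/- Let φ : ℝ → ℝ be twice continuously differentiable. For x ≠ y in ℝ², define H(x,y) := φ(s̃(x,y))/‖x−y‖ with s̃(x,y) = (‖y‖²−‖x‖²)/(2‖x−y‖). Then (∇ₓ+∇_y)²H(x,y) = φ''(s̃(x,y))/‖x−y‖, where (∇ₓ+∇_y)² := Σ_{i=1}^2 (∂_{x_i}+∂_{y_i})². -/

import Mathlib

open scoped InnerProductSpace

noncomputable section Stmt9Aux

abbrev E2 := EuclideanSpace ℝ (Fin 2)

def rr (p : E2 × E2) : ℝ := ‖p.1 - p.2‖
def ss (p : E2 × E2) : ℝ := (‖p.2‖ ^ 2 - ‖p.1‖ ^ 2) / (2 * ‖p.1 - p.2‖)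

lemma rr_shift (p : E2 × E2) (v : E2) (t : ℝ) : rr (p + t • (v, v)) = rr p := by
  simp only [rr, Prod.fst_add, Prod.snd_add, Prod.smul_mk]
  congr 1
  abel

lemma ss_shift (p : E2 × E2) (v : E2) (t : ℝ) :
    ss (p + t • (v, v)) = ss p + t * (⟪p.2 - p.1, v⟫_ℝ / rr p) := by
  have hn : ∀ a : E2, ‖a + t • v‖ ^ 2 = ‖a‖ ^ 2 + 2 * (t * ⟪a, v⟫_ℝ) + t ^ 2 * ‖v‖ ^ 2 := by
    intro a
    rw [@norm_add_sq_real, real_inner_smul_right, norm_smul]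
    simp [mul_pow, sq_abs]
  simp only [ss, rr, Prod.fst_add, Prod.snd_add, Prod.smul_mk, hn]
  rw [inner_sub_left]
  rcases eq_or_ne (‖p.1 - p.2‖) 0 with h | h
  · simp [h]
  · have e : ‖p.1 + t • v - (p.2 + t • v)‖ = ‖p.1 - p.2‖ := by
      congr 1; abel
    simp only [e]
    field_simp
    ring


lemma line_hasDerivAt {f : E2 × E2 → ℝ} {p w : E2 × E2} (hf : DifferentiableAt ℝ f p) :
    HasDerivAt (fun t : ℝ => f (p + t • w)) (fderiv ℝ f p w) 0 := by
  have hc : HasDerivAt (fun t : ℝ => p + t • w) w 0 := by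
    simpa using ((hasDerivAt_id (0 : ℝ)).smul_const w).const_add p
  have hf' : HasFDerivAt f (fderiv ℝ f p) ((fun t : ℝ => p + t • w) 0) := by
    simpa using hf.hasFDerivAt
  exact hf'.comp_hasDerivAt 0 hc

lemma curve_hasDerivAt {g : ℝ → ℝ} (hg : Differentiable ℝ g) (c₀ c₁ c₂ : ℝ) :
    HasDerivAt (fun t : ℝ => g (c₀ + t * c₁) / c₂) (deriv g c₀ * c₁ / c₂) 0 := by
  have h1 : HasDerivAt (fun t : ℝ => c₀ + t * c₁) c₁ 0 := by
    simpa using ((hasDerivAt_id (0 : ℝ)).mul_const c₁).const_add c₀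
  have h2 : HasDerivAt g (deriv g (c₀ + 0 * c₁)) (c₀ + 0 * c₁) :=
    (hg (c₀ + 0 * c₁)).hasDerivAt
  have := (h2.comp 0 h1).div_const c₂
  simpa using this

lemma diff_rr {p : E2 × E2} (hp : p.1 ≠ p.2) : DifferentiableAt ℝ rr p := by
  have h0 : p.1 - p.2 ≠ 0 := sub_ne_zero.mpr hp
  exact (differentiable_fst.sub differentiable_snd).differentiableAt.norm ℝ h0

lemma rr_ne {p : E2 × E2} (hp : p.1 ≠ p.2) : rr p ≠ 0 :=
  norm_ne_zero_iff.mpr (sub_ne_zero.mpr hp)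

lemma diff_ss {p : E2 × E2} (hp : p.1 ≠ p.2) : DifferentiableAt ℝ ss p := by
  have hnum : DifferentiableAt ℝ (fun q : E2 × E2 => ‖q.2‖ ^ 2 - ‖q.1‖ ^ 2) p := by
    have h1 : Differentiable ℝ (fun q : E2 × E2 => ‖q.2‖ ^ 2) :=
      (contDiff_norm_sq ℝ (n := 1)).differentiable one_ne_zero |>.comp differentiable_snd
    have h2 : Differentiable ℝ (fun q : E2 × E2 => ‖q.1‖ ^ 2) :=
      (contDiff_norm_sq ℝ (n := 1)).differentiable one_ne_zero |>.comp differentiable_fst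
    exact (h1.sub h2).differentiableAt
  have hden : DifferentiableAt ℝ (fun q : E2 × E2 => 2 * ‖q.1 - q.2‖) p :=
    (diff_rr hp).const_mul 2
  unfold ss
  simp only [div_eq_mul_inv]
  exact hnum.mul (hden.inv
    (mul_ne_zero (two_ne_zero) (show ‖p.1 - p.2‖ ≠ 0 from rr_ne hp)))

lemma diff_m (v : E2) : Differentiable ℝ (fun p : E2 × E2 => (⟪p.2 - p.1, v⟫_ℝ : ℝ)) :=
  (differentiable_snd.sub differentiable_fst).inner ℝ (differentiable_const v)


lemma curve_hasDerivAt' {g : ℝ → ℝ} (hg : Differentiable ℝ g) (c₀ c₁ d c₂ : ℝ) :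
    HasDerivAt (fun t : ℝ => g (c₀ + t * c₁) * d / c₂) (deriv g c₀ * c₁ * d / c₂) 0 := by
  have h1 : HasDerivAt (fun t : ℝ => c₀ + t * c₁) c₁ 0 := by
    simpa using ((hasDerivAt_id (0 : ℝ)).mul_const c₁).const_add c₀
  have h2 : HasDerivAt g (deriv g (c₀ + 0 * c₁)) (c₀ + 0 * c₁) :=
    (hg (c₀ + 0 * c₁)).hasDerivAt
  have := ((h2.comp 0 h1).mul_const d).div_const c₂
  simpa using this

lemma diff_H {φ : ℝ → ℝ} (hφd : Differentiable ℝ φ) {p : E2 × E2} (hp : p.1 ≠ p.2) :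
    DifferentiableAt ℝ (fun q : E2 × E2 => φ (ss q) / rr q) p := by
  simp only [div_eq_mul_inv]
  exact ((hφd (ss p)).comp p (diff_ss hp)).mul ((diff_rr hp).inv (rr_ne hp))

lemma m_shift (p : E2 × E2) (v : E2) (t : ℝ) :
    (⟪(p + t • (v, v)).2 - (p + t • (v, v)).1, v⟫_ℝ : ℝ) = ⟪p.2 - p.1, v⟫_ℝ := by
  congr 1
  simp only [Prod.snd_add, Prod.fst_add, Prod.smul_mk]
  abel

lemma fderiv_H {φ : ℝ → ℝ} (hφd : Differentiable ℝ φ) {p : E2 × E2} (hp : p.1 ≠ p.2)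
    (v : E2) :
    fderiv ℝ (fun q : E2 × E2 => φ (ss q) / rr q) p (v, v)
      = deriv φ (ss p) * (⟪p.2 - p.1, v⟫_ℝ / rr p) / rr p := by
  have h1 := line_hasDerivAt (w := (v, v)) (diff_H hφd hp)
  have h2 := curve_hasDerivAt hφd (ss p) (⟪p.2 - p.1, v⟫_ℝ / rr p) (rr p)
  have heq : (fun t : ℝ => φ (ss (p + t • (v, v))) / rr (p + t • (v, v)))
      = fun t : ℝ => φ (ss p + t * (⟪p.2 - p.1, v⟫_ℝ / rr p)) / rr p := by
    funext t
    rw [ss_shift, rr_shift]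
  rw [heq] at h1
  exact h1.unique h2

/-- The directional-derivative function. -/
def FF (φ : ℝ → ℝ) (v : E2) (p : E2 × E2) : ℝ :=
  deriv φ (ss p) * (⟪p.2 - p.1, v⟫_ℝ / rr p) / rr p

lemma diff_FF {φ : ℝ → ℝ} (hφd : Differentiable ℝ (deriv φ)) {p : E2 × E2}
    (hp : p.1 ≠ p.2) (v : E2) : DifferentiableAt ℝ (FF φ v) p := by
  unfold FF
  simp only [div_eq_mul_inv]
  exact (((hφd (ss p)).comp p (diff_ss hp)).mul
    (((diff_m v p).mul ((diff_rr hp).inv (rr_ne hp))))).mul ((diff_rr hp).inv (rr_ne hp))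

lemma fderiv_FF {φ : ℝ → ℝ} (hφd : Differentiable ℝ (deriv φ)) {p : E2 × E2}
    (hp : p.1 ≠ p.2) (v : E2) :
    fderiv ℝ (FF φ v) p (v, v)
      = deriv (deriv φ) (ss p) * (⟪p.2 - p.1, v⟫_ℝ / rr p)
          * (⟪p.2 - p.1, v⟫_ℝ / rr p) / rr p := by
  have h1 := line_hasDerivAt (w := (v, v)) (diff_FF hφd hp v)
  have h2 := curve_hasDerivAt' hφd (ss p) (⟪p.2 - p.1, v⟫_ℝ / rr p)
    (⟪p.2 - p.1, v⟫_ℝ / rr p) (rr p)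
  have heq : (fun t : ℝ => FF φ v (p + t • (v, v)))
      = fun t : ℝ => deriv φ (ss p + t * (⟪p.2 - p.1, v⟫_ℝ / rr p))
          * (⟪p.2 - p.1, v⟫_ℝ / rr p) / rr p := by
    funext t
    unfold FF
    rw [ss_shift, rr_shift, m_shift]
  rw [heq] at h1
  exact h1.unique h2

end Stmt9Aux

/-- Let `φ : ℝ → ℝ` be `C²` and, for `x ≠ y` in `ℝ²`, set
`H(x,y) = φ(s̃(x,y))/‖x−y‖` with `s̃(x,y) = (‖y‖²−‖x‖²)/(2‖x−y‖)`. Then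
`(∇ₓ+∇_y)²H(x,y) = φ''(s̃(x,y))/‖x−y‖`, where
`(∇ₓ+∇_y)² = Σᵢ (∂_{xᵢ}+∂_{yᵢ})²` (second derivatives in the diagonal directions `(eᵢ,eᵢ)`). -/
theorem stmt9 (φ : ℝ → ℝ) (hφ : ContDiff ℝ 2 φ)
    (x y : EuclideanSpace ℝ (Fin 2)) (hxy : x ≠ y) :
    (∑ i : Fin 2,
      fderiv ℝ (fun p : EuclideanSpace ℝ (Fin 2) × EuclideanSpace ℝ (Fin 2) =>
          fderiv ℝ (fun q : EuclideanSpace ℝ (Fin 2) × EuclideanSpace ℝ (Fin 2) =>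
              φ ((‖q.2‖ ^ 2 - ‖q.1‖ ^ 2) / (2 * ‖q.1 - q.2‖)) / ‖q.1 - q.2‖) p
            (EuclideanSpace.single i 1, EuclideanSpace.single i 1)) (x, y)
        (EuclideanSpace.single i 1, EuclideanSpace.single i 1))
      = deriv (deriv φ) ((‖y‖ ^ 2 - ‖x‖ ^ 2) / (2 * ‖x - y‖)) / ‖x - y‖ := by
  have hφ1 : Differentiable ℝ φ := hφ.differentiable two_ne_zero
  have hφ11 : ContDiff ℝ (1 + 1) φ := by exact_mod_cast hφ
  have hφ2 : Differentiable ℝ (deriv φ) :=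
    ((contDiff_succ_iff_deriv.mp hφ11).2.2).differentiable one_ne_zero
  have hfun : (fun q : E2 × E2 =>
      φ ((‖q.2‖ ^ 2 - ‖q.1‖ ^ 2) / (2 * ‖q.1 - q.2‖)) / ‖q.1 - q.2‖)
      = fun q : E2 × E2 => φ (ss q) / rr q := rfl
  have hU : IsOpen {p : E2 × E2 | p.1 ≠ p.2} :=
    isOpen_ne_fun continuous_fst continuous_snd
  have hmem : {p : E2 × E2 | p.1 ≠ p.2} ∈ nhds ((x, y) : E2 × E2) :=
    hU.mem_nhds hxy
  have key : ∀ v : E2,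
      fderiv ℝ (fun p : E2 × E2 =>
          fderiv ℝ (fun q : E2 × E2 => φ (ss q) / rr q) p (v, v)) (x, y) (v, v)
        = deriv (deriv φ) (ss (x, y)) * (⟪y - x, v⟫_ℝ / rr (x, y))
            * (⟪y - x, v⟫_ℝ / rr (x, y)) / rr (x, y) := by
    intro v
    have hev : (fun p : E2 × E2 =>
        fderiv ℝ (fun q : E2 × E2 => φ (ss q) / rr q) p (v, v))
          =ᶠ[nhds ((x, y) : E2 × E2)] FF φ v := by
      filter_upwards [hmem] with p hp
      exact fderiv_H hφ1 hp v
    rw [hev.fderiv_eq]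
    exact fderiv_FF hφ2 hxy v
  rw [hfun]
  have hsum : ∀ i : Fin 2,
      fderiv ℝ (fun p : E2 × E2 =>
          fderiv ℝ (fun q : E2 × E2 => φ (ss q) / rr q) p
            (EuclideanSpace.single i 1, EuclideanSpace.single i 1)) (x, y)
        (EuclideanSpace.single i 1, EuclideanSpace.single i 1)
        = deriv (deriv φ) (ss (x, y)) * ((y - x) i / rr (x, y))
            * ((y - x) i / rr (x, y)) / rr (x, y) := by
    intro i
    have := key (EuclideanSpace.single i 1)
    rwa [EuclideanSpace.inner_single_right, conj_trivial, one_mul] at this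
  rw [Finset.sum_congr rfl fun i _ => hsum i]
  have hr : rr (x, y) ≠ 0 := rr_ne hxy
  have hnorm2 : ∑ i : Fin 2, ((y - x) i * (y - x) i) = rr (x, y) ^ 2 := by
    have h1 : (⟪y - x, y - x⟫_ℝ : ℝ) = ∑ i : Fin 2, ((y - x) i * (y - x) i) := by
      simp only [PiLp.inner_apply, RCLike.inner_apply, conj_trivial]
    have h2 : (⟪y - x, y - x⟫_ℝ : ℝ) = ‖y - x‖ ^ 2 := real_inner_self_eq_norm_sq _
    rw [← h1, h2, rr, ← norm_sub_rev]
  have hss : ((‖y‖ ^ 2 - ‖x‖ ^ 2) / (2 * ‖x - y‖)) = ss (x, y) := rfl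
  have hrw : (‖x - y‖ : ℝ) = rr (x, y) := rfl
  rw [hss, hrw]
  have hterm : ∀ i : Fin 2,
      deriv (deriv φ) (ss (x, y)) * ((y - x) i / rr (x, y))
          * ((y - x) i / rr (x, y)) / rr (x, y)
        = deriv (deriv φ) (ss (x, y)) * ((y - x) i * (y - x) i) / rr (x, y) ^ 3 := by
    intro i
    field_simp
  rw [Finset.sum_congr rfl fun i _ => hterm i, ← Finset.sum_div, ← Finset.mul_sum,
    hnorm2]
  field_simp
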